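/- If q is a power of 2 and q - 1 is prime (a Mersenne prime) with q ≥ 5, then ex(q² - q - 2, C₄) ≥ (1/2)q³ - (1/2)q² - 3q + 3, which is strictly greater than (1/2)q³ - q². -/

import Mathlib

open Finset

namespace ERC4

variable (p : ℕ) [Fact p.Prime]

abbrev V3 := Fin 3 → ZMod p

def B (x y : V3 p) : ZMod p := x 0 * y 1 + x 1 * y 0 + x 2 * y 2

lemma B_symm (x y : V3 p) : B p x y = B p y x := by unfold B; ring

def Bl : V3 p →ₗ[ZMod p] V3 p →ₗ[ZMod p] ZMod p :=
  LinearMap.mk₂ (ZMod p) (B p)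
    (fun x x' y => by unfold B; simp only [Pi.add_apply]; ring)
    (fun c x y => by unfold B; simp only [Pi.smul_apply, smul_eq_mul]; ring)
    (fun x y y' => by unfold B; simp only [Pi.add_apply]; ring)
    (fun c x y => by unfold B; simp only [Pi.smul_apply, smul_eq_mul]; ring)

@[simp] lemma Bl_apply (x y : V3 p) : Bl p x y = B p x y := rfl

lemma B_smul_left (c : ZMod p) (x y : V3 p) : B p (c • x) y = c * B p x y := by
  unfold B; simp only [Pi.smul_apply, smul_eq_mul]; ring

lemma B_nondeg {v : V3 p} (h : ∀ x, B p x v = 0) : v = 0 := by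
  funext i
  fin_cases i
  · simpa [B] using h ![0,1,0]
  · simpa [B] using h ![1,0,0]
  · simpa [B] using h ![0,0,1]

def Nzd (v : V3 p) : Prop :=
  v 0 = 1 ∨ (v 0 = 0 ∧ v 1 = 1) ∨ (v 0 = 0 ∧ v 1 = 0 ∧ v 2 = 1)

instance : DecidablePred (Nzd p) := fun v => by unfold Nzd; infer_instance

lemma Nzd.ne_zero {v : V3 p} (h : Nzd p v) : v ≠ 0 := by
  rintro rfl
  rcases h with h | ⟨-, h⟩ | ⟨-, -, h⟩ <;> simp at h

lemma Nzd.eq_of_smul {v w : V3 p} (hv : Nzd p v) (hw : Nzd p w) (c : ZMod p)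
    (h : w = c • v) : w = v := by
  rcases eq_or_ne c 0 with rfl | hc
  · rw [zero_smul] at h; exact absurd h hw.ne_zero
  have hc1 : c = 1 := by
    rcases hv with h1 | ⟨h1, h2⟩ | ⟨h1, h2, h3⟩
    · have hw0 : w 0 = c := by rw [h]; simp [h1]
      rcases hw with g1 | ⟨g1, g2⟩ | ⟨g1, g2, g3⟩
      · rw [hw0] at g1; exact g1
      · exact absurd (hw0 ▸ g1) hc
      · exact absurd (hw0 ▸ g1) hc
    · have hw0 : w 0 = 0 := by rw [h]; simp [h1]
      have hw1 : w 1 = c := by rw [h]; simp [h2]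
      rcases hw with g1 | ⟨g1, g2⟩ | ⟨g1, g2, g3⟩
      · rw [hw0] at g1; exact absurd g1.symm one_ne_zero
      · rw [hw1] at g2; exact g2
      · exact absurd (hw1 ▸ g2) hc
    · have hw1 : w 1 = 0 := by rw [h]; simp [h2]
      have hw2 : w 2 = c := by rw [h]; simp [h3]
      rcases hw with g1 | ⟨g1, g2⟩ | ⟨g1, g2, g3⟩
      · have hw0 : w 0 = 0 := by rw [h]; simp [h1]
        rw [hw0] at g1; exact absurd g1.symm one_ne_zero
      · rw [hw1] at g2; exact absurd g2.symm one_ne_zero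
      · rw [hw2] at g3; exact g3
  rw [hc1, one_smul] at h; exact h

def nscal (v : V3 p) : ZMod p :=
  if v 0 ≠ 0 then (v 0)⁻¹ else if v 1 ≠ 0 then (v 1)⁻¹ else (v 2)⁻¹

lemma nscal_spec {v : V3 p} (hv : v ≠ 0) : Nzd p (nscal p v • v) ∧ nscal p v ≠ 0 := by
  by_cases h0 : v 0 = 0
  · by_cases h1 : v 1 = 0
    · have h2 : v 2 ≠ 0 := by
        intro h2; apply hv; funext i; fin_cases i <;> assumption
      have hs : nscal p v = (v 2)⁻¹ := by simp [nscal, h0, h1]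
      rw [hs]
      refine ⟨Or.inr (Or.inr ⟨?_, ?_, ?_⟩), inv_ne_zero h2⟩ <;>
        simp [h0, h1, inv_mul_cancel₀ h2]
    · have hs : nscal p v = (v 1)⁻¹ := by simp [nscal, h0, h1]
      rw [hs]
      refine ⟨Or.inr (Or.inl ⟨?_, ?_⟩), inv_ne_zero h1⟩ <;>
        simp [h0, inv_mul_cancel₀ h1]
  · have hs : nscal p v = (v 0)⁻¹ := by simp [nscal, h0]
    rw [hs]
    refine ⟨Or.inl ?_, inv_ne_zero h0⟩
    simp [inv_mul_cancel₀ h0]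


abbrev PV := {v : V3 p // Nzd p v}

instance : DecidableEq (PV p) := Subtype.instDecidableEq

def nzdEquiv : PV p ≃ ((ZMod p × ZMod p) ⊕ (ZMod p ⊕ Unit)) where
  toFun v := if v.1 0 = 0 then
      (if v.1 1 = 0 then Sum.inr (Sum.inr ()) else Sum.inr (Sum.inl (v.1 2)))
    else Sum.inl (v.1 1, v.1 2)
  invFun x := match x with
    | Sum.inl (a, b) => ⟨![1,a,b], Or.inl rfl⟩
    | Sum.inr (Sum.inl t) => ⟨![0,1,t], Or.inr (Or.inl ⟨rfl, rfl⟩)⟩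
    | Sum.inr (Sum.inr _) => ⟨![0,0,1], Or.inr (Or.inr ⟨rfl, rfl, rfl⟩)⟩
  left_inv v := by
    rcases v with ⟨v, hv⟩
    rcases hv with h1 | ⟨h1, h2⟩ | ⟨h1, h2, h3⟩
    · have h1' : v 0 ≠ 0 := by rw [h1]; exact one_ne_zero
      simp only [h1', if_neg]
      refine Subtype.ext (funext fun i => ?_)
      fin_cases i <;> simp [h1]
    · have h2' : v 1 ≠ 0 := by rw [h2]; exact one_ne_zero
      simp only [h1, if_pos, h2', if_neg]
      refine Subtype.ext (funext fun i => ?_)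
      fin_cases i <;> simp [h1, h2]
    · simp only [h1, h2, if_pos]
      refine Subtype.ext (funext fun i => ?_)
      fin_cases i <;> simp [h1, h2, h3]
  right_inv x := by
    rcases x with ⟨a, b⟩ | t | u <;>
      simp [Matrix.cons_val_zero, Matrix.cons_val_one]

lemma card_PV : Fintype.card (PV p) = p ^ 2 + p + 1 := by
  rw [Fintype.card_congr (nzdEquiv p)]
  simp [ZMod.card, sq]; ring


lemma Bl_ne_zero {v : V3 p} (hv : v ≠ 0) : Bl p v ≠ 0 := by
  intro h
  exact hv (B_nondeg p fun x => by
    rw [B_symm]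
    simpa using LinearMap.congr_fun h x)

lemma finrank_ker {v : V3 p} (hv : v ≠ 0) :
    Module.finrank (ZMod p) (LinearMap.ker (Bl p v)) = 2 := by
  have hne := Bl_ne_zero p hv
  obtain ⟨z, hz⟩ : ∃ z, Bl p v z ≠ 0 := by
    by_contra h
    push_neg at h
    exact hne (LinearMap.ext h)
  have hsurj : LinearMap.range (Bl p v) = ⊤ := by
    rw [LinearMap.range_eq_top]
    intro a
    refine ⟨(a * (Bl p v z)⁻¹) • z, ?_⟩
    rw [map_smul, smul_eq_mul, mul_assoc, inv_mul_cancel₀ hz, mul_one]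
  have h3 := LinearMap.finrank_range_add_finrank_ker (Bl p v)
  rw [hsurj, finrank_top, Module.finrank_self, Module.finrank_fin_fun] at h3
  omega

def nmap (x : V3 p) : PV p :=
  if h : x = 0 then ⟨![0,0,1], Or.inr (Or.inr ⟨rfl,rfl,rfl⟩)⟩
  else ⟨nscal p x • x, (nscal_spec p h).1⟩

lemma card_perp (v : PV p) :
    (univ.filter fun x : PV p => B p x.1 v.1 = 0).card = p + 1 := by
  have hp2 : 2 ≤ p := (Fact.out : p.Prime).two_le
  set W := LinearMap.ker (Bl p v.1) with hW
  haveI : Fintype W := Fintype.ofFinite W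
  have hcardW : Fintype.card W = p ^ 2 := by
    rw [Module.card_eq_pow_finrank (K := ZMod p), finrank_ker p v.2.ne_zero, ZMod.card]
  -- the set of solutions in V3
  have hsub : Fintype.card {x : V3 p // B p x v.1 = 0} = p ^ 2 := by
    rw [← hcardW]
    exact Fintype.card_congr (Equiv.subtypeEquivRight fun x => by
      rw [hW, LinearMap.mem_ker, Bl_apply, B_symm])
  have hfilt : (univ.filter fun x : V3 p => B p x v.1 = 0).card = p ^ 2 := by
    rw [← hsub, Fintype.card_subtype]
  set K0 := univ.filter fun x : V3 p => B p x v.1 = 0 ∧ x ≠ 0 with hK0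
  have hzero : B p (0 : V3 p) v.1 = 0 := by unfold B; simp
  have hins : insert (0 : V3 p) K0 = univ.filter fun x : V3 p => B p x v.1 = 0 := by
    ext x
    simp only [Finset.mem_insert, hK0, Finset.mem_filter, Finset.mem_univ, true_and]
    constructor
    · rintro (rfl | ⟨h, -⟩)
      · exact hzero
      · exact h
    · intro h
      rcases eq_or_ne x 0 with rfl | hx
      · exact Or.inl rfl
      · exact Or.inr ⟨h, hx⟩
  have h0notin : (0 : V3 p) ∉ K0 := by simp [hK0]
  have hcardK0 : K0.card + 1 = p ^ 2 := by
    rw [← hfilt, ← hins, Finset.card_insert_of_notMem h0notin]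
  set N := univ.filter fun x : PV p => B p x.1 v.1 = 0 with hN
  have hmapmem : ∀ x ∈ K0, nmap p x ∈ N := by
    intro x hx
    rw [hK0, Finset.mem_filter] at hx
    obtain ⟨-, hBx, hx0⟩ := hx
    rw [hN, Finset.mem_filter]
    refine ⟨Finset.mem_univ _, ?_⟩
    rw [nmap, dif_neg hx0]
    simpa [B_smul_left, hBx]
  have hcardsum := Finset.card_eq_sum_card_fiberwise hmapmem
  have hfiber : ∀ n ∈ N, (K0.filter fun x => nmap p x = n).card = p - 1 := by
    intro n hn
    rw [hN, Finset.mem_filter] at hn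
    have hBn : B p n.1 v.1 = 0 := hn.2
    have himg : K0.filter (fun x => nmap p x = n)
        = (univ.erase (0 : ZMod p)).image (fun c => c • n.1) := by
      ext x
      simp only [Finset.mem_filter, Finset.mem_image, Finset.mem_erase, Finset.mem_univ,
        hK0, true_and, and_true]
      constructor
      · rintro ⟨⟨hBx, hx0⟩, hnm⟩
        rw [nmap, dif_neg hx0] at hnm
        have h1 : nscal p x • x = n.1 := congrArg Subtype.val hnm
        have hs0 : nscal p x ≠ 0 := (nscal_spec p hx0).2
        refine ⟨(nscal p x)⁻¹, inv_ne_zero hs0, ?_⟩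
        rw [← h1, smul_smul, inv_mul_cancel₀ hs0, one_smul]
      · rintro ⟨c, hc, rfl⟩
        have hx0 : c • n.1 ≠ 0 := smul_ne_zero hc n.2.ne_zero
        refine ⟨⟨by rw [B_smul_left, hBn, mul_zero], hx0⟩, ?_⟩
        rw [nmap, dif_neg hx0]
        refine Subtype.ext ?_
        show nscal p (c • n.1) • (c • n.1) = n.1
        have hnzd := (nscal_spec p hx0).1
        rw [smul_smul] at hnzd ⊢
        exact Nzd.eq_of_smul p n.2 hnzd _ rfl
    rw [himg, Finset.card_image_of_injOn, Finset.card_erase_of_mem (Finset.mem_univ _),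
      Finset.card_univ, ZMod.card]
    intro c _ c' _ hcc
    have hcc' : c • n.1 = c' • n.1 := hcc
    have : (c - c') • n.1 = 0 := by rw [sub_smul, hcc', sub_self]
    rcases smul_eq_zero.mp this with h | h
    · exact sub_eq_zero.mp h
    · exact absurd h n.2.ne_zero
  rw [Finset.sum_congr rfl hfiber, Finset.sum_const, smul_eq_mul] at hcardsum
  have key : N.card * (p - 1) + 1 = p ^ 2 := by rw [← hcardsum]; exact hcardK0
  have key2 : N.card * (p - 1) = (p + 1) * (p - 1) := by
    have : (p + 1) * (p - 1) + 1 = p ^ 2 := by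
      cases' Nat.exists_eq_add_of_le hp2 with k hk
      subst hk
      have h1 : 2 + k - 1 = 1 + k := by omega
      rw [h1]; ring
    omega
  exact Nat.eq_of_mul_eq_mul_right (by omega) key2


lemma ker_ne_ker {v w : PV p} (hvw : v ≠ w) :
    LinearMap.ker (Bl p v.1) ≠ LinearMap.ker (Bl p w.1) := by
  intro hK
  obtain ⟨z, hz⟩ : ∃ z, z ∉ LinearMap.ker (Bl p v.1) := by
    by_contra hz
    push_neg at hz
    exact Bl_ne_zero p v.2.ne_zero (LinearMap.ker_eq_top.mp (Submodule.eq_top_iff'.mpr hz))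
  have hzv : Bl p v.1 z ≠ 0 := fun h => hz (LinearMap.mem_ker.mpr h)
  have hzw : Bl p w.1 z ≠ 0 := fun h => hz (hK ▸ LinearMap.mem_ker.mpr h)
  set c := Bl p v.1 z * (Bl p w.1 z)⁻¹ with hc
  set u := v.1 - c • w.1 with hu
  have hBu : ∀ t, Bl p u t = Bl p v.1 t - c * Bl p w.1 t := by
    intro t
    rw [hu, map_sub, map_smul, LinearMap.sub_apply, LinearMap.smul_apply, smul_eq_mul]
  have hsup : LinearMap.ker (Bl p v.1) ⊔ Submodule.span (ZMod p) {z} = ⊤ := by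
    have hlt : LinearMap.ker (Bl p v.1)
        < LinearMap.ker (Bl p v.1) ⊔ Submodule.span (ZMod p) {z} := by
      refine lt_of_le_of_ne le_sup_left fun h => hz ?_
      rw [h]
      exact Submodule.mem_sup_right (Submodule.mem_span_singleton_self z)
    have h1 := Submodule.finrank_lt_finrank_of_lt hlt
    have h2 := Submodule.finrank_le (LinearMap.ker (Bl p v.1) ⊔ Submodule.span (ZMod p) {z})
    rw [finrank_ker p v.2.ne_zero] at h1
    rw [Module.finrank_fin_fun] at h2
    refine Submodule.eq_top_of_finrank_eq ?_
    rw [Module.finrank_fin_fun]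
    omega
  have hkeru : LinearMap.ker (Bl p u) = ⊤ := by
    rw [eq_top_iff, ← hsup, sup_le_iff]
    constructor
    · intro t ht
      have htv : Bl p v.1 t = 0 := LinearMap.mem_ker.mp ht
      have htw : Bl p w.1 t = 0 := LinearMap.mem_ker.mp (hK ▸ ht)
      rw [LinearMap.mem_ker, hBu, htv, htw, mul_zero, sub_zero]
    · rw [Submodule.span_le, Set.singleton_subset_iff]
      rw [SetLike.mem_coe, LinearMap.mem_ker, hBu, hc, mul_assoc,
        inv_mul_cancel₀ hzw, mul_one, sub_self]
  have hu0 : u = 0 := by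
    refine B_nondeg p fun x => ?_
    rw [B_symm, ← Bl_apply]
    exact LinearMap.congr_fun (LinearMap.ker_eq_top.mp hkeru) x
  have : v.1 = c • w.1 := by rwa [hu, sub_eq_zero] at hu0
  exact hvw (Subtype.ext (Nzd.eq_of_smul p w.2 v.2 c this))

lemma common_unique {v w x y : PV p} (hvw : v ≠ w)
    (hxv : B p x.1 v.1 = 0) (hxw : B p x.1 w.1 = 0)
    (hyv : B p y.1 v.1 = 0) (hyw : B p y.1 w.1 = 0) : x = y := by
  set M := LinearMap.ker (Bl p v.1) ⊓ LinearMap.ker (Bl p w.1) with hM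
  have hxM : x.1 ∈ M := by
    refine Submodule.mem_inf.mpr ⟨?_, ?_⟩ <;> rw [LinearMap.mem_ker, Bl_apply, B_symm]
    · exact hxv
    · exact hxw
  have hyM : y.1 ∈ M := by
    refine Submodule.mem_inf.mpr ⟨?_, ?_⟩ <;> rw [LinearMap.mem_ker, Bl_apply, B_symm]
    · exact hyv
    · exact hyw
  have hrM : Module.finrank (ZMod p) M ≤ 1 := by
    have hsum := Submodule.finrank_sup_add_finrank_inf_eq
      (LinearMap.ker (Bl p v.1)) (LinearMap.ker (Bl p w.1))
    rw [finrank_ker p v.2.ne_zero, finrank_ker p w.2.ne_zero, ← hM] at hsum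
    have hsup3 : 3 ≤ Module.finrank (ZMod p)
        ↥(LinearMap.ker (Bl p v.1) ⊔ LinearMap.ker (Bl p w.1)) := by
      by_contra hlt
      push_neg at hlt
      have hle : Module.finrank (ZMod p)
          ↥(LinearMap.ker (Bl p v.1) ⊔ LinearMap.ker (Bl p w.1)) ≤ 2 := by omega
      have e1 := Submodule.eq_of_le_of_finrank_le
        (S₂ := LinearMap.ker (Bl p v.1) ⊔ LinearMap.ker (Bl p w.1)) le_sup_left
        (by rw [finrank_ker p v.2.ne_zero]; exact hle)
      have e2 := Submodule.eq_of_le_of_finrank_le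
        (S₂ := LinearMap.ker (Bl p v.1) ⊔ LinearMap.ker (Bl p w.1)) le_sup_right
        (by rw [finrank_ker p w.2.ne_zero]; exact hle)
      exact ker_ne_ker p hvw (e1.trans e2.symm)
    omega
  have hspan : Submodule.span (ZMod p) {x.1} = M := by
    refine Submodule.eq_of_le_of_finrank_le ?_ ?_
    · rw [Submodule.span_le, Set.singleton_subset_iff]; exact hxM
    · rw [finrank_span_singleton x.2.ne_zero]; exact hrM
  obtain ⟨c, hcy⟩ := Submodule.mem_span_singleton.mp (hspan ▸ hyM)
  exact (Subtype.ext (Nzd.eq_of_smul p x.2 y.2 c hcy.symm)).symm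


def absPt (b : Option (ZMod p)) : PV p :=
  match b with
  | none => ⟨![0,1,0], Or.inr (Or.inl ⟨rfl, rfl⟩)⟩
  | some b => ⟨![1, -(b^2) * (2:ZMod p)⁻¹, b], Or.inl rfl⟩

lemma B_absPt (h2 : (2:ZMod p) ≠ 0) (b : Option (ZMod p)) :
    B p (absPt p b).1 (absPt p b).1 = 0 := by
  rcases b with _ | b
  · simp [B, absPt]
  · show (1:ZMod p) * (-(b^2) * 2⁻¹) + (-(b^2) * 2⁻¹) * 1 + b * b = 0
    field_simp
    ring

lemma absPt_injective : Function.Injective (absPt p) := by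
  intro b b' h
  have h' := congrArg Subtype.val h
  rcases b with _ | b <;> rcases b' with _ | b'
  · rfl
  · exact absurd (congrFun h' 0).symm one_ne_zero
  · exact absurd (congrFun h' 0) one_ne_zero
  · rw [show (b = b') from congrFun h' 2]

lemma card_abs (h2 : (2:ZMod p) ≠ 0) :
    (univ.filter fun v : PV p => B p v.1 v.1 = 0).card = p + 1 := by
  have himg : univ.filter (fun v : PV p => B p v.1 v.1 = 0) = univ.image (absPt p) := by
    ext v
    simp only [Finset.mem_filter, Finset.mem_univ, true_and, Finset.mem_image]
    constructor
    · intro hB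
      rcases v with ⟨v, hv⟩
      rcases hv with h1 | ⟨h1, h1'⟩ | ⟨h1, h1', h1''⟩
      · refine ⟨some (v 2), ?_⟩
        have hB' : v 0 * v 1 + v 1 * v 0 + v 2 * v 2 = 0 := hB
        rw [h1] at hB'
        have hv1 : v 1 = -(v 2 ^ 2) * (2:ZMod p)⁻¹ := by
          field_simp
          linear_combination hB'
        refine Subtype.ext (funext fun i => ?_)
        fin_cases i <;> simp [absPt, h1, hv1]
      · refine ⟨none, ?_⟩
        have hB' : v 0 * v 1 + v 1 * v 0 + v 2 * v 2 = 0 := hB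
        rw [h1] at hB'
        have hv2 : v 2 = 0 := by
          have : v 2 * v 2 = 0 := by linear_combination hB'
          exact mul_self_eq_zero.mp this
        refine Subtype.ext (funext fun i => ?_)
        fin_cases i <;> simp [absPt, h1, h1', hv2]
      · exfalso
        have hB' : v 0 * v 1 + v 1 * v 0 + v 2 * v 2 = 0 := hB
        rw [h1, h1', h1''] at hB'
        simp at hB'
    · rintro ⟨b, rfl⟩
      exact B_absPt p h2 b
  rw [himg, Finset.card_image_of_injective _ (absPt_injective p), Finset.card_univ,
    Fintype.card_option, ZMod.card]

def G : SimpleGraph (PV p) where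
  Adj x y := x ≠ y ∧ B p x.1 y.1 = 0
  symm := ⟨fun x y ⟨h1, h2⟩ => ⟨h1.symm, by rwa [B_symm]⟩⟩
  loopless := ⟨fun x ⟨h, _⟩ => h rfl⟩

instance : DecidableRel (G p).Adj := fun x y =>
  inferInstanceAs (Decidable (x ≠ y ∧ B p x.1 y.1 = 0))

lemma G_neighborFinset (v : PV p) :
    (G p).neighborFinset v = (univ.filter fun x : PV p => B p x.1 v.1 = 0).erase v := by
  ext x
  rw [SimpleGraph.mem_neighborFinset, Finset.mem_erase, Finset.mem_filter]
  constructor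
  · rintro ⟨h1, h2⟩
    exact ⟨fun h => h1 (h.symm), Finset.mem_univ _, by rwa [B_symm]⟩
  · rintro ⟨h1, -, h2⟩
    exact ⟨fun h => h1 (h.symm), by rwa [B_symm]⟩

lemma degree_eq (v : PV p) :
    (G p).degree v + (if B p v.1 v.1 = 0 then 1 else 0) = p + 1 := by
  rw [← SimpleGraph.card_neighborFinset_eq_degree, G_neighborFinset]
  by_cases hB : B p v.1 v.1 = 0
  · rw [if_pos hB, Finset.card_erase_of_mem (by simp [hB]), card_perp]
    have h1 : 1 ≤ (univ.filter fun x : PV p => B p x.1 v.1 = 0).card := by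
      rw [card_perp]; omega
    rw [card_perp] at h1
    omega
  · rw [if_neg hB, Finset.erase_eq_of_notMem (by simp [hB]), card_perp]

lemma edges_G (h2 : (2:ZMod p) ≠ 0) :
    2 * (G p).edgeFinset.card + (p + 1) = (p^2 + p + 1) * (p + 1) := by
  have hsum : ∑ v : PV p, ((G p).degree v + (if B p v.1 v.1 = 0 then 1 else 0))
      = (p^2 + p + 1) * (p + 1) := by
    rw [Finset.sum_congr rfl (fun v _ => degree_eq p v), Finset.sum_const, Finset.card_univ,
      card_PV, smul_eq_mul]
  rw [Finset.sum_add_distrib, SimpleGraph.sum_degrees_eq_twice_card_edges,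
    ← Finset.card_filter, card_abs p h2] at hsum
  exact hsum


def a1 : PV p := absPt p (some 0)
def a2 : PV p := absPt p none
def a3 : PV p := absPt p (some 1)

lemma a_ne_12 : a1 p ≠ a2 p := fun h => by simpa using absPt_injective p h
lemma a_ne_13 : a1 p ≠ a3 p := fun h => by simpa using absPt_injective p h
lemma a_ne_23 : a2 p ≠ a3 p := fun h => by simpa using absPt_injective p h

def St (x : PV p) : Prop := x ≠ a1 p ∧ x ≠ a2 p ∧ x ≠ a3 p

instance : DecidablePred (St p) := fun x => by unfold St; infer_instance

abbrev VS := {x : PV p // St p x}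

lemma card_VS : Fintype.card (VS p) = p^2 + p - 2 := by
  rw [Fintype.card_subtype]
  have hfe : univ.filter (St p) = univ \ {a1 p, a2 p, a3 p} := by
    ext x
    simp only [Finset.mem_filter, Finset.mem_univ, true_and, Finset.mem_sdiff,
      Finset.mem_insert, Finset.mem_singleton, St]
    tauto
  rw [hfe, Finset.card_sdiff_of_subset (by intro x _; exact Finset.mem_univ x), Finset.card_univ, card_PV]
  have h3 : ({a1 p, a2 p, a3 p} : Finset (PV p)).card = 3 := by
    rw [Finset.card_insert_of_notMem (by
        simp only [Finset.mem_insert, Finset.mem_singleton]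
        push_neg
        exact ⟨a_ne_12 p, a_ne_13 p⟩),
      Finset.card_insert_of_notMem (by simp [a_ne_23 p]), Finset.card_singleton]
  rw [h3]
  omega

def Gd : SimpleGraph (VS p) where
  Adj x y := x ≠ y ∧ B p x.1.1 y.1.1 = 0
  symm := ⟨fun x y ⟨h1, h2⟩ => ⟨h1.symm, by rwa [B_symm]⟩⟩
  loopless := ⟨fun x ⟨h, _⟩ => h rfl⟩

instance : DecidableRel (Gd p).Adj := fun x y =>
  inferInstanceAs (Decidable (x ≠ y ∧ B p x.1.1 y.1.1 = 0))

lemma Gd_c4free {a b c d : VS p} (hab : (Gd p).Adj a b) (hbc : (Gd p).Adj b c)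
    (hcd : (Gd p).Adj c d) (hda : (Gd p).Adj d a) : a = c ∨ b = d := by
  by_contra h
  push_neg at h
  obtain ⟨hac, hbd⟩ := h
  have hac' : a.1 ≠ c.1 := fun h => hac (Subtype.ext h)
  have hbdeq : b.1 = d.1 := common_unique p hac'
    (by rw [B_symm]; exact hab.2) hbc.2 hda.2 (by rw [B_symm]; exact hcd.2)
  exact hbd (Subtype.ext hbdeq)

lemma edges_Gd (h2 : (2:ZMod p) ≠ 0) :
    (G p).edgeFinset.card ≤ (Gd p).edgeFinset.card + 3 * p := by
  classical
  have habs : ∀ b, B p (absPt p b).1 (absPt p b).1 = 0 := B_absPt p h2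
  have hdeg : ∀ b, (G p).degree (absPt p b) = p := by
    intro b
    have := degree_eq p (absPt p b)
    rw [if_pos (habs b)] at this
    omega
  have hsubset : (G p).edgeFinset ⊆
      ((Gd p).edgeFinset.image (Sym2.map (fun x : VS p => x.1)))
      ∪ (G p).incidenceFinset (a1 p) ∪ (G p).incidenceFinset (a2 p)
      ∪ (G p).incidenceFinset (a3 p) := by
    intro e he
    induction e with
    | _ x y =>
      rw [SimpleGraph.mem_edgeFinset, SimpleGraph.mem_edgeSet] at he
      have hmemedge : s(x, y) ∈ (G p).edgeSet := he
      simp only [Finset.mem_union]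
      by_cases hx : St p x
      · by_cases hy : St p y
        · refine Or.inl (Or.inl (Or.inl ?_))
          rw [Finset.mem_image]
          refine ⟨s(⟨x, hx⟩, ⟨y, hy⟩), ?_, rfl⟩
          rw [SimpleGraph.mem_edgeFinset, SimpleGraph.mem_edgeSet]
          exact ⟨fun h => he.1 (congrArg Subtype.val h), he.2⟩
        · have hy' : y = a1 p ∨ y = a2 p ∨ y = a3 p := by
            by_contra h; push_neg at h; exact hy ⟨h.1, h.2.1, h.2.2⟩
          rcases hy' with rfl | rfl | rfl
          · exact Or.inl (Or.inl (Or.inr ((G p).mem_incidenceFinset _ _ |>.mpr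
              ⟨hmemedge, Sym2.mem_mk_right x _⟩)))
          · exact Or.inl (Or.inr ((G p).mem_incidenceFinset _ _ |>.mpr
              ⟨hmemedge, Sym2.mem_mk_right x _⟩))
          · exact Or.inr ((G p).mem_incidenceFinset _ _ |>.mpr
              ⟨hmemedge, Sym2.mem_mk_right x _⟩)
      · have hx' : x = a1 p ∨ x = a2 p ∨ x = a3 p := by
          by_contra h; push_neg at h; exact hx ⟨h.1, h.2.1, h.2.2⟩
        rcases hx' with rfl | rfl | rfl
        · exact Or.inl (Or.inl (Or.inr ((G p).mem_incidenceFinset _ _ |>.mpr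
            ⟨hmemedge, Sym2.mem_mk_left _ y⟩)))
        · exact Or.inl (Or.inr ((G p).mem_incidenceFinset _ _ |>.mpr
            ⟨hmemedge, Sym2.mem_mk_left _ y⟩))
        · exact Or.inr ((G p).mem_incidenceFinset _ _ |>.mpr
            ⟨hmemedge, Sym2.mem_mk_left _ y⟩)
  have hle := Finset.card_le_card hsubset
  have t1 := Finset.card_union_le
    ((((Gd p).edgeFinset.image (Sym2.map (fun x : VS p => x.1)))
      ∪ (G p).incidenceFinset (a1 p)) ∪ (G p).incidenceFinset (a2 p))
    ((G p).incidenceFinset (a3 p))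
  have t2 := Finset.card_union_le
    (((Gd p).edgeFinset.image (Sym2.map (fun x : VS p => x.1)))
      ∪ (G p).incidenceFinset (a1 p)) ((G p).incidenceFinset (a2 p))
  have t3 := Finset.card_union_le
    ((Gd p).edgeFinset.image (Sym2.map (fun x : VS p => x.1)))
    ((G p).incidenceFinset (a1 p))
  have ti := Finset.card_image_le (s := (Gd p).edgeFinset)
    (f := Sym2.map (fun x : VS p => x.1))
  have d1 : ((G p).incidenceFinset (a1 p)).card = p := by
    rw [SimpleGraph.card_incidenceFinset_eq_degree]; exact hdeg _
  have d2 : ((G p).incidenceFinset (a2 p)).card = p := by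
    rw [SimpleGraph.card_incidenceFinset_eq_degree]; exact hdeg _
  have d3 : ((G p).incidenceFinset (a3 p)).card = p := by
    rw [SimpleGraph.card_incidenceFinset_eq_degree]; exact hdeg _
  omega

end ERC4


set_option maxHeartbeats 1000000

/-- If `q = 2^k` and `q - 1` is a (Mersenne) prime with `q ≥ 5`, then there is a `C₄`-free
graph on `q² - q - 2` vertices with at least `(1/2)q³ - (1/2)q² - 3q + 3` edges, i.e.
`ex(q² - q - 2, C₄) ≥ (1/2)q³ - (1/2)q² - 3q + 3`; moreover this bound is strictly greater
than `(1/2)q³ - q²`. -/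
theorem ex_C4_mersenne (q : ℕ) (hq5 : 5 ≤ q) (hq2 : ∃ k : ℕ, q = 2 ^ k)
    (hprime : Nat.Prime (q - 1)) :
    (∃ (G : SimpleGraph (Fin (q ^ 2 - q - 2))) (_ : DecidableRel G.Adj),
      (∀ a b c d, G.Adj a b → G.Adj b c → G.Adj c d → G.Adj d a → a = c ∨ b = d) ∧
      (G.edgeFinset.card : ℝ) ≥
        (1 / 2) * (q : ℝ) ^ 3 - (1 / 2) * (q : ℝ) ^ 2 - 3 * q + 3) ∧
    (1 / 2) * (q : ℝ) ^ 3 - (1 / 2) * (q : ℝ) ^ 2 - 3 * q + 3 >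
      (1 / 2) * (q : ℝ) ^ 3 - (q : ℝ) ^ 2 := by
  classical
  set p := q - 1 with hp
  haveI : Fact p.Prime := ⟨hprime⟩
  have hq : q = p + 1 := by omega
  have hp4 : 4 ≤ p := by omega
  have h2 : (2 : ZMod p) ≠ 0 := by
    intro h
    have h' : ((2 : ℕ) : ZMod p) = 0 := by exact_mod_cast h
    rw [ZMod.natCast_eq_zero_iff] at h'
    have := Nat.le_of_dvd (by norm_num) h'
    omega
  have hcard : Fintype.card (ERC4.VS p) = q ^ 2 - q - 2 := by
    rw [ERC4.card_VS]
    have hs : (p + 1) ^ 2 = p ^ 2 + 2 * p + 1 := by ring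
    rw [hq]
    omega
  have e : ERC4.VS p ≃ Fin (q ^ 2 - q - 2) := Fintype.equivFinOfCardEq hcard
  refine ⟨⟨?_, ?_, ?_, ?_⟩, ?_⟩
  · exact
      { Adj := fun i j => (ERC4.Gd p).Adj (e.symm i) (e.symm j)
        symm := ⟨fun i j h => h.symm⟩
        loopless := ⟨fun i h => h.ne rfl⟩ }
  · exact Classical.decRel _
  · intro a b c d h1 h2 h3 h4
    rcases ERC4.Gd_c4free p h1 h2 h3 h4 with h | h
    · exact Or.inl (by simpa using congrArg e h)
    · exact Or.inr (by simpa using congrArg e h)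
  · set Gfin : SimpleGraph (Fin (q ^ 2 - q - 2)) :=
      { Adj := fun i j => (ERC4.Gd p).Adj (e.symm i) (e.symm j)
        symm := ⟨fun i j h => h.symm⟩
        loopless := ⟨fun i h => h.ne rfl⟩ } with hGfin
    have iso : ERC4.Gd p ≃g Gfin :=
      ⟨e, by intro a b; simp [hGfin]⟩
    have hG := ERC4.edges_G p h2
    have hGd := ERC4.edges_Gd p h2
    have key : (p ^ 2 + p + 1) * (p + 1)
        ≤ 2 * (ERC4.Gd p).edgeFinset.card + 6 * p + (p + 1) := by
      rw [← hG]
      omega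
    have hkey' : ((p : ℝ) ^ 2 + p + 1) * ((p : ℝ) + 1)
        ≤ 2 * ((ERC4.Gd p).edgeFinset.card : ℝ) + 6 * p + ((p : ℝ) + 1) := by
      exact_mod_cast key
    have hqr : (q : ℝ) = (p : ℝ) + 1 := by rw [hq]; push_cast; ring
    have main : ∀ (I : Fintype Gfin.edgeSet),
        (1 / 2) * (q : ℝ) ^ 3 - (1 / 2) * (q : ℝ) ^ 2 - 3 * q + 3
          ≤ ((@SimpleGraph.edgeFinset _ Gfin I).card : ℝ) := by
      intro I
      rw [SimpleGraph.edgeFinset_card, ← Nat.card_eq_fintype_card,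
        Nat.card_congr iso.mapEdgeSet.symm, Nat.card_eq_fintype_card,
        ← SimpleGraph.edgeFinset_card, hqr]
      nlinarith [hkey']
    exact main _
  · have hq5' : (5 : ℝ) ≤ (q : ℝ) := by exact_mod_cast hq5
    nlinarith [sq_nonneg ((q : ℝ) - 5)]
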